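/- Let D be the equispaced trigonometric differentiation matrix of odd size N = 2n+1. For each integer m with 1 ≤ m ≤ n, the 2-dimensional real subspace of ℝ^N spanned by the vectors c^{(m)} = (cos(m t_j))_j and s^{(m)} = (sin(m t_j))_j is invariant under D, with D c^{(m)} = -m s^{(m)} and D s^{(m)} = m c^{(m)}. -/

import Mathlib

open Real
open Complex Finset

/-- Equidistant nodes `t_j = -π + 2πj/N`. -/
noncomputable def node (N : ℕ) (j : Fin N) : ℝ := -π + 2 * π * (j.1 + 1) / N

/-- The equispaced trigonometric differentiation matrix (real). -/
noncomputable def Dmat (N : ℕ) : Matrix (Fin N) (Fin N) ℝ := fun j k =>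
  if j = k then 0
  else (-1 : ℝ) ^ (j.1 + k.1) / (2 * Real.sin (π * ((j.1 : ℝ) - (k.1 : ℝ)) / N))




lemma expNegSub (x : ℝ) :
    Complex.exp (-(x:ℂ)*Complex.I) - Complex.exp ((x:ℂ)*Complex.I) = -(2*Complex.I*Real.sin x) := by
  rw [Complex.exp_mul_I, Complex.exp_mul_I, Complex.cos_neg, Complex.sin_neg]
  push_cast
  ring

lemma telescope (M : ℕ) (x : ℝ) :
    Complex.exp (-(2*M*x:ℝ) * Complex.I) =
      1 - 2*Complex.I*Real.sin x * ∑ r ∈ Finset.range M, Complex.exp (-((2*r+1:ℕ)*x:ℝ) * Complex.I) := by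
  induction M with
  | zero => simp
  | succ M ih =>
    rw [Finset.sum_range_succ, mul_add, ← sub_sub, ← ih]
    have h1 : (-(2*(M+1:ℕ)*x:ℝ) : ℂ) * Complex.I
        = (-((2*M+1:ℕ)*x:ℝ) : ℂ) * Complex.I + (-(x:ℂ)*Complex.I) := by
      push_cast; ring
    have h2 : (-(2*(M:ℕ)*x:ℝ) : ℂ) * Complex.I
        = (-((2*M+1:ℕ)*x:ℝ) : ℂ) * Complex.I + ((x:ℂ)*Complex.I) := by
      push_cast; ring
    rw [h1, h2, Complex.exp_add, Complex.exp_add]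
    linear_combination Complex.exp ((-((2*M+1:ℕ)*x:ℝ) : ℂ) * Complex.I) * expNegSub x

lemma rootsum (N a : ℕ) (hN : 0 < N) (ha : 0 < a) (haN : a < 2*N) (hae : Even a) :
    ∑ d ∈ Finset.range N, Complex.exp ((π * a / N : ℝ) * Complex.I) ^ d = 0 := by
  have hN0 : (N:ℝ) ≠ 0 := by exact_mod_cast hN.ne'
  set z : ℂ := Complex.exp ((π * a / N : ℝ) * Complex.I) with hz
  have hzN : z ^ N = 1 := by
    rw [hz, ← Complex.exp_nat_mul]
    obtain ⟨b, hb⟩ := hae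
    have : (N:ℂ) * ((π * a / N : ℝ) * Complex.I) = (b:ℤ) * (2 * π * Complex.I) := by
      push_cast
      have hN0' : (N:ℂ) ≠ 0 := by exact_mod_cast hN.ne'
      field_simp
      rw [hb]; push_cast; ring
    rw [this, Complex.exp_int_mul_two_pi_mul_I]
  have hz1 : z ≠ 1 := by
    rw [hz, Ne, Complex.exp_eq_one_iff]
    rintro ⟨k, hk⟩
    have hre : (π * a / N : ℝ) = 2 * π * k := by
      have h2 : ((π * a / N : ℝ) : ℂ) = ((2 * π * k : ℝ) : ℂ) :=
        mul_right_cancel₀ Complex.I_ne_zero (by rw [hk]; push_cast; ring)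
      exact_mod_cast h2
    have hak : (a:ℝ) = 2 * k * N := by
      field_simp at hre
      nlinarith [Real.pi_pos, hre]
    have hakz : (a:ℤ) = 2 * k * N := by exact_mod_cast hak
    rcases le_or_gt k 0 with h | h
    · have : (a:ℤ) ≤ 0 := by nlinarith [(Int.ofNat_le.mpr hN.le : (0:ℤ) ≤ N)]
      omega
    · have h1 : (1:ℤ) ≤ k := h
      have : (2*N : ℤ) ≤ a := by nlinarith [(by exact_mod_cast hN : (0:ℤ) < N)]
      omega
  rw [geom_sum_eq hz1, hzN, sub_self, zero_div]

noncomputable def Fc (N M : ℕ) (d : ℤ) : ℂ :=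
  if (N:ℤ) ∣ d then 0
  else (-1:ℂ)^d / ((2 * Real.sin (π * d / N) : ℝ) : ℂ)
       * Complex.exp ((-(2*π*M*d/N) : ℝ) * Complex.I)

lemma Fc_periodic (n M : ℕ) : Function.Periodic (Fc (2*n+1) M) ((2*n+1 : ℕ) : ℤ) := by
  intro d
  set N : ℕ := 2*n+1 with hN
  have hN0 : (N:ℝ) ≠ 0 := by positivity
  have hdvd : ((N:ℤ) ∣ d + N) ↔ ((N:ℤ) ∣ d) := by
    constructor <;> intro h
    · simpa using h.sub (dvd_refl (N:ℤ))
    · exact h.add (dvd_refl _)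
  unfold Fc
  rw [if_congr hdvd rfl rfl]
  by_cases h : (N:ℤ) ∣ d
  · simp [h]
  · rw [if_neg h, if_neg h]
    have h1 : (-1:ℂ)^(d + (N:ℤ)) = -(-1:ℂ)^d := by
      rw [zpow_add₀ (by norm_num : (-1:ℂ) ≠ 0)]
      have : ((N:ℤ)) = ((N:ℕ):ℤ) := rfl
      rw [this, zpow_natCast]
      have : Odd N := ⟨n, by omega⟩
      rw [this.neg_one_pow]; ring
    have h2 : Real.sin (π * ((d:ℝ) + N) / N) = -Real.sin (π * d / N) := by
      have : π * ((d:ℝ) + N) / N = π * d / N + π := by field_simp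
      rw [this, Real.sin_add_pi]
    have h3 : Complex.exp ((-(2*π*M*((d:ℝ)+N)/N) : ℝ) * Complex.I)
        = Complex.exp ((-(2*π*M*(d:ℝ)/N) : ℝ) * Complex.I) := by
      have hr : (-(2*π*M*((d:ℝ)+N)/N) : ℝ) = -(2*π*M*(d:ℝ)/N) + (-(M:ℝ))*(2*π) := by
        field_simp; ring
      have : ((-(2*π*M*((d:ℝ)+N)/N) : ℝ) : ℂ) * Complex.I
          = ((-(2*π*M*(d:ℝ)/N) : ℝ) : ℂ) * Complex.I + ((-(M:ℤ) : ℤ) : ℂ) * (2 * π * Complex.I) := by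
        rw [hr]; push_cast; ring
      rw [this, Complex.exp_add, Complex.exp_int_mul_two_pi_mul_I, mul_one]
    simp only [Int.cast_add, Int.cast_natCast]
    rw [h1, h2, h3]
    have hs : ((2 * -Real.sin (π * (d:ℝ) / N) : ℝ) : ℂ) = -((2 * Real.sin (π * (d:ℝ) / N) : ℝ) : ℂ) := by
      push_cast; ring
    rw [hs]
    field_simp

lemma Fc_modeq (n M : ℕ) {a b : ℤ} (h : a % ((2*n+1:ℕ):ℤ) = b % ((2*n+1:ℕ):ℤ)) :
    Fc (2*n+1) M a = Fc (2*n+1) M b := by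
  have hd : ((2*n+1:ℕ):ℤ) ∣ b - a := Int.ModEq.dvd h
  obtain ⟨k, hk⟩ := hd
  have : b = a + k * ((2*n+1:ℕ):ℤ) := by linarith
  rw [this]
  exact (((Fc_periodic n M).int_mul k) a).symm

lemma antisym (n : ℕ) :
    ∑ d ∈ Finset.Ico 1 (2*n+1),
      ((-1:ℂ)^d / ((2 * Real.sin (π * d / ((2*n+1 : ℕ):ℝ)) : ℝ) : ℂ)) = 0 := by
  set N := 2*n+1 with hN
  apply Finset.sum_involution (g := fun d _ => N - d)
  · intro d hd
    rw [Finset.mem_Ico] at hd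
    have h1 : 1 ≤ d := hd.1
    have h2 : d < N := hd.2
    have hcast : ((N - d : ℕ) : ℝ) = (N:ℝ) - d := by
      rw [Nat.cast_sub h2.le]
    have hNR : (N:ℝ) ≠ 0 := by positivity
    have hsin : Real.sin (π * ((N - d : ℕ):ℝ) / N) = Real.sin (π * d / N) := by
      rw [hcast, show π * ((N:ℝ) - d) / N = π - π * d / N by field_simp,
        Real.sin_pi_sub]
    have hpow : (-1:ℂ)^(N - d) = -(-1:ℂ)^d := by
      have hNodd : Odd N := ⟨n, by omega⟩
      rcases Nat.even_or_odd d with he | ho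
      · have : Odd (N - d) := Nat.Odd.sub_even h2.le hNodd he
        rw [this.neg_one_pow, he.neg_one_pow]
      · have : Even (N - d) := Nat.Odd.sub_odd hNodd ho
        rw [this.neg_one_pow, ho.neg_one_pow]; ring
    rw [hsin, hpow]
    ring
  · intro d hd _
    rw [Finset.mem_Ico] at hd
    omega
  · intro d hd
    rw [Finset.mem_Ico] at hd ⊢
    omega
  · intro d hd
    rw [Finset.mem_Ico] at hd
    omega

lemma innerRootSum (n M r : ℕ) (hr : r < M) (hMn : M ≤ n) :
    ∑ d ∈ Finset.Ico 1 (2*n+1),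
      (-1:ℂ)^d * Complex.exp ((-(((2*r+1:ℕ):ℝ) * (π * d / ((2*n+1:ℕ):ℝ))) : ℝ) * Complex.I)
      = -1 := by
  set N := 2*n+1 with hN
  set a := N - (2*r+1) with ha
  have hNpos : 0 < N := by omega
  have h2r1 : 2*r+1 ≤ N := by omega
  have hapos : 0 < a := by omega
  have haN : a < 2*N := by omega
  have hae : Even a := ⟨n - r, by omega⟩
  have hterm : ∀ d : ℕ,
      (-1:ℂ)^d * Complex.exp ((-(((2*r+1:ℕ):ℝ) * (π * d / ((N:ℕ):ℝ))) : ℝ) * Complex.I)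
      = (Complex.exp ((π * a / N : ℝ) * Complex.I)) ^ d := by
    intro d
    have hm1 : (-1:ℂ) = Complex.exp (π * Complex.I) := Complex.exp_pi_mul_I.symm
    rw [hm1, ← Complex.exp_nat_mul, ← Complex.exp_nat_mul, ← Complex.exp_add]
    congr 1
    have hcast : ((a:ℕ):ℝ) = (N:ℝ) - (2*r+1 : ℕ) := by
      rw [ha, Nat.cast_sub h2r1]
    have hNR : (N:ℝ) ≠ 0 := by positivity
    have key : (d:ℝ) * (π * (a:ℝ) / N) = (d:ℝ) * π + (-((((2*r+1:ℕ)):ℝ) * (π * d / N))) := by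
      rw [hcast]; field_simp [hNR]; ring
    have key' : (((d:ℝ) * (π * (a:ℝ) / N) : ℝ) : ℂ)
        = (((d:ℝ) * π + (-((((2*r+1:ℕ)):ℝ) * (π * d / N))) : ℝ) : ℂ) := by
      exact_mod_cast congrArg Complex.ofReal key
    push_cast at key' ⊢
    linear_combination (-1:ℂ) * Complex.I * key'
  rw [Finset.sum_congr rfl (fun d _ => hterm d)]
  have hroot := rootsum N a hNpos hapos haN hae
  have hins : Finset.range N = insert 0 (Finset.Ico 1 N) := by
    ext x; simp only [Finset.mem_range, Finset.mem_insert, Finset.mem_Ico]; omega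
  rw [hins, Finset.sum_insert (by simp)] at hroot
  rw [pow_zero] at hroot
  linear_combination hroot

lemma keysum (n M : ℕ) (hM1 : 1 ≤ M) (hMn : M ≤ n) :
    ∑ d ∈ Finset.Ico 1 (2*n+1), Fc (2*n+1) M (d:ℤ) = Complex.I * M := by
  set N := 2*n+1 with hN
  have hNpos : 0 < N := by omega
  have hNR : (0:ℝ) < (N:ℝ) := by exact_mod_cast hNpos
  have step : ∀ d ∈ Finset.Ico 1 N, Fc N M (d:ℤ) =
      (-1:ℂ)^d / ((2 * Real.sin (π * d / ((N:ℕ):ℝ)) : ℝ) : ℂ)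
      - Complex.I * ((-1:ℂ)^d * ∑ r ∈ Finset.range M,
          Complex.exp ((-(((2*r+1:ℕ):ℝ) * (π * (d:ℝ) / ((N:ℕ):ℝ))) : ℝ) * Complex.I)) := by
    intro d hd
    rw [Finset.mem_Ico] at hd
    have hnd : ¬ ((N:ℤ) ∣ (d:ℤ)) := by
      intro hdv
      have := Int.eq_zero_of_dvd_of_natAbs_lt_natAbs hdv (by simp; omega)
      simp at this; omega
    have hsin : 0 < Real.sin (π * d / N) := by
      apply Real.sin_pos_of_pos_of_lt_pi
      · have : (0:ℝ) < (d:ℝ) := by exact_mod_cast hd.1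
        positivity
      · rw [div_lt_iff₀ hNR]
        have : (d:ℝ) < (N:ℝ) := by exact_mod_cast hd.2
        nlinarith [Real.pi_pos]
    have htel := telescope M (π * d / N)
    unfold Fc
    rw [if_neg hnd]
    simp only [Int.cast_natCast]
    rw [Complex.ofReal_neg]
    have harg : ((2*π*(M:ℝ)*(d:ℝ)/N) : ℝ) = (2*(M:ℝ)*(π * (d:ℝ) / N) : ℝ) := by
      ring
    rw [harg, htel]
    have hs' : ((Real.sin (π * d / N) : ℝ) : ℂ) ≠ 0 := by
      exact_mod_cast hsin.ne'
    push_cast at hs' ⊢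
    field_simp
    simp only [zpow_natCast]
    ring
  rw [Finset.sum_congr rfl step, Finset.sum_sub_distrib, antisym n]
  have : ∑ d ∈ Finset.Ico 1 N, Complex.I * ((-1:ℂ)^d * ∑ r ∈ Finset.range M,
      Complex.exp ((-(((2*r+1:ℕ):ℝ) * (π * (d:ℝ) / ((N:ℕ):ℝ))) : ℝ) * Complex.I))
      = Complex.I * ∑ r ∈ Finset.range M, ∑ d ∈ Finset.Ico 1 N,
        (-1:ℂ)^d * Complex.exp ((-(((2*r+1:ℕ):ℝ) * (π * (d:ℝ) / ((N:ℕ):ℝ))) : ℝ) * Complex.I) := by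
    rw [← Finset.mul_sum]
    congr 1
    rw [Finset.sum_comm]
    exact Finset.sum_congr rfl fun d _ => Finset.mul_sum _ _ _
  rw [this]
  have hin : ∀ r ∈ Finset.range M, ∑ d ∈ Finset.Ico 1 N,
      (-1:ℂ)^d * Complex.exp ((-(((2*r+1:ℕ):ℝ) * (π * (d:ℝ) / ((N:ℕ):ℝ))) : ℝ) * Complex.I) = -1 :=
    fun r hr => innerRootSum n M r (Finset.mem_range.mp hr) hMn
  rw [Finset.sum_congr rfl hin]
  simp

lemma reindex (n M : ℕ) (j : Fin (2*n+1)) :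
    ∑ k : Fin (2*n+1), Fc (2*n+1) M ((j.1:ℤ) - (k.1:ℤ))
      = ∑ d ∈ Finset.Ico 1 (2*n+1), Fc (2*n+1) M (d:ℤ) := by
  have h1 : ∑ i : Fin (2*n+1), Fc (2*n+1) M ((i.1:ℤ))
      = ∑ k : Fin (2*n+1), Fc (2*n+1) M ((j.1:ℤ) - (k.1:ℤ)) := by
    apply Fintype.sum_equiv (Equiv.subLeft j)
    intro i
    have hsub : ((Equiv.subLeft j) i).1 = ((2*n+1 - i.1) + j.1) % (2*n+1) := by
      simp [Equiv.subLeft, Fin.sub_def]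
    rw [hsub]
    apply Fc_modeq
    have hiN : i.1 ≤ 2*n+1 := (i.2).le
    have hA : ((((2*n+1 - i.1) + j.1) % (2*n+1) : ℕ) : ℤ)
        = (((2*n+1:ℕ):ℤ) - i.1 + j.1) % ((2*n+1:ℕ):ℤ) := by
      rw [Int.natCast_mod]
      congr 1
      push_cast [Nat.cast_sub hiN]
      ring
    rw [hA]
    have h3 : ((j.1:ℤ) - (((2*n+1:ℕ):ℤ) - i.1 + j.1) % ((2*n+1:ℕ):ℤ)) % ((2*n+1:ℕ):ℤ)
        = ((j.1:ℤ) - (((2*n+1:ℕ):ℤ) - i.1 + j.1)) % ((2*n+1:ℕ):ℤ) := by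
      conv_lhs => rw [Int.sub_emod]
      conv_rhs => rw [Int.sub_emod]
      rw [Int.emod_emod_of_dvd _ (dvd_refl _)]
    rw [h3, show (j.1:ℤ) - (((2*n+1:ℕ):ℤ) - i.1 + j.1) = (i.1:ℤ) - ((2*n+1:ℕ):ℤ) by ring,
      Int.sub_emod, Int.emod_self, sub_zero, Int.emod_emod_of_dvd _ (dvd_refl _)]
  rw [← h1]
  rw [Fin.sum_univ_eq_sum_range (fun d => Fc (2*n+1) M (d:ℤ)) (2*n+1)]
  have hins : Finset.range (2*n+1) = insert 0 (Finset.Ico 1 (2*n+1)) := by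
    ext x; simp only [Finset.mem_range, Finset.mem_insert, Finset.mem_Ico]; omega
  rw [hins, Finset.sum_insert (by simp)]
  have h0 : Fc (2*n+1) M ((0:ℕ):ℤ) = 0 := by
    unfold Fc; rw [if_pos (by simp)]
  rw [h0, zero_add]

lemma termEq (n M : ℕ) (j k : Fin (2*n+1)) :
    ((Dmat (2*n+1) j k : ℝ) : ℂ) * Complex.exp ((((M:ℝ) * node (2*n+1) k) : ℝ) * Complex.I)
      = Complex.exp ((((M:ℝ) * node (2*n+1) j) : ℝ) * Complex.I)
        * Fc (2*n+1) M ((j.1:ℤ) - (k.1:ℤ)) := by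
  by_cases hjk : j = k
  · subst hjk
    unfold Dmat Fc
    rw [if_pos rfl, if_pos (by simp)]
    simp
  · have hvne : j.1 ≠ k.1 := fun h => hjk (Fin.ext h)
    have hnd : ¬ ((2*n+1:ℕ):ℤ) ∣ ((j.1:ℤ) - (k.1:ℤ)) := by
      intro hdv
      have hlt : ((j.1:ℤ) - (k.1:ℤ)).natAbs < ((2*n+1:ℕ):ℤ).natAbs := by
        have := j.2; have := k.2; omega
      have := Int.eq_zero_of_dvd_of_natAbs_lt_natAbs hdv hlt
      omega
    unfold Dmat Fc
    rw [if_neg hjk, if_neg hnd]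
    have hNR : ((2*n+1:ℕ):ℝ) ≠ 0 := by positivity
    have hexp : Complex.exp ((((M:ℝ) * node (2*n+1) k) : ℝ) * Complex.I)
        = Complex.exp ((((M:ℝ) * node (2*n+1) j) : ℝ) * Complex.I)
          * Complex.exp (((-(2*π*(M:ℝ)*((((j.1:ℤ) - (k.1:ℤ)):ℤ):ℝ)/((2*n+1:ℕ):ℝ))) : ℝ) * Complex.I) := by
      rw [← Complex.exp_add, ← add_mul, ← Complex.ofReal_add]
      congr 2
      unfold node
      push_cast
      field_simp
      ring
    have hpow : (-1:ℂ)^((j.1:ℤ)-(k.1:ℤ)) = (-1:ℂ)^(j.1+k.1 : ℕ) := by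
      rw [zpow_sub₀ (by norm_num : (-1:ℂ) ≠ 0), zpow_natCast, zpow_natCast, pow_add]
      rcases Nat.even_or_odd k.1 with h | h
      · rw [h.neg_one_pow]; ring
      · rw [h.neg_one_pow]; ring
    have hd : ((((j.1:ℤ) - (k.1:ℤ)):ℤ):ℝ) = (j.1:ℝ) - (k.1:ℝ) := by push_cast; ring
    rw [hexp, hd, hpow]
    push_cast
    ring

lemma keypoint (n M : ℕ) (hM1 : 1 ≤ M) (hMn : M ≤ n) (j : Fin (2*n+1)) :
    ∑ k : Fin (2*n+1), ((Dmat (2*n+1) j k : ℝ) : ℂ)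
        * Complex.exp ((((M:ℝ) * node (2*n+1) k) : ℝ) * Complex.I)
      = Complex.I * M * Complex.exp ((((M:ℝ) * node (2*n+1) j) : ℝ) * Complex.I) := by
  rw [Finset.sum_congr rfl (fun k _ => termEq n M j k), ← Finset.mul_sum,
    reindex n M j, keysum n M hM1 hMn]
  ring

theorem cos_sin_invariant_plane (n : ℕ) (hn : 1 ≤ n) (m : ℕ) (hm1 : 1 ≤ m) (hmn : m ≤ n)
    (c s : Fin (2 * n + 1) → ℝ)
    (hc : ∀ j, c j = Real.cos (m * node (2 * n + 1) j))
    (hs : ∀ j, s j = Real.sin (m * node (2 * n + 1) j)) :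
    (Dmat (2 * n + 1)).mulVec c = -(m : ℝ) • s ∧
    (Dmat (2 * n + 1)).mulVec s = (m : ℝ) • c ∧
    ∀ v ∈ Submodule.span ℝ ({c, s} : Set (Fin (2 * n + 1) → ℝ)),
      (Dmat (2 * n + 1)).mulVec v ∈ Submodule.span ℝ ({c, s} : Set (Fin (2 * n + 1) → ℝ)) := by
  have hDc : (Dmat (2 * n + 1)).mulVec c = -(m : ℝ) • s := by
    funext j
    have hre := congrArg Complex.re (keypoint n m hm1 hmn j)
    rw [Complex.re_sum] at hre
    simp only [Complex.re_ofReal_mul, Complex.exp_ofReal_mul_I_re] at hre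
    have hrhs : (Complex.I * (m:ℂ)
        * Complex.exp ((((m:ℝ) * node (2*n+1) j) : ℝ) * Complex.I)).re
        = -((m:ℝ) * Real.sin ((m:ℝ) * node (2*n+1) j)) := by
      rw [Complex.exp_mul_I]
      simp [Complex.mul_re, Complex.mul_im, ← Complex.ofReal_mul, Complex.cos_ofReal_im, Complex.sin_ofReal_re, Complex.cos_ofReal_re, Complex.sin_ofReal_im]
    rw [hrhs] at hre
    show ∑ k, Dmat (2*n+1) j k * c k = _
    simp only [hc]
    rw [hre]
    simp [hs, mul_comm]
  have hDs : (Dmat (2 * n + 1)).mulVec s = (m : ℝ) • c := by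
    funext j
    have him := congrArg Complex.im (keypoint n m hm1 hmn j)
    rw [Complex.im_sum] at him
    simp only [Complex.im_ofReal_mul, Complex.exp_ofReal_mul_I_im] at him
    have hrhs : (Complex.I * (m:ℂ)
        * Complex.exp ((((m:ℝ) * node (2*n+1) j) : ℝ) * Complex.I)).im
        = (m:ℝ) * Real.cos ((m:ℝ) * node (2*n+1) j) := by
      rw [Complex.exp_mul_I]
      simp [Complex.mul_re, Complex.mul_im, ← Complex.ofReal_mul, Complex.cos_ofReal_im, Complex.sin_ofReal_re, Complex.cos_ofReal_re, Complex.sin_ofReal_im]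
    rw [hrhs] at him
    show ∑ k, Dmat (2*n+1) j k * s k = _
    simp only [hs]
    rw [him]
    simp [hc, mul_comm]
  refine ⟨hDc, hDs, ?_⟩
  intro v hv
  induction hv using Submodule.span_induction with
  | mem x hx =>
    rcases hx with hx | hx
    · subst hx
      rw [hDc]
      exact Submodule.smul_mem _ _ (Submodule.subset_span (by simp))
    · simp only [Set.mem_singleton_iff] at hx
      subst hx
      rw [hDs]
      exact Submodule.smul_mem _ _ (Submodule.subset_span (by simp))
  | zero => simp [Matrix.mulVec_zero]
  | add x y hx hy ihx ihy =>
    rw [Matrix.mulVec_add]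
    exact Submodule.add_mem _ ihx ihy
  | smul a x hx ihx =>
    rw [Matrix.mulVec_smul]
    exact Submodule.smul_mem _ _ ihx
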